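/- Under the setup of the alternating minimization for F(X1, C, B, D) = ‖(A1 − X1) ⊙ W1‖_F² + ‖A2 − X1C − BD‖_F² (sequences (X1)_p, C_p, B_p, D_p satisfying the first-order stationarity equations, m_p = F((X1)_p, C_p, B_p, D_p)), if Σ_{p=1}^∞ √(m_p − m_{p+1}) < ∞, then the limits lim_{p→∞} B_pD_p and lim_{p→∞} (X1)_p exist; moreover, writing L* = lim_{p→∞} B_pD_p, one also has lim_{p→∞} B_{p+1}D_p = L*. -/

import Mathlib

open Matrix Filter Topology

noncomputable def frob {α β : Type*} [Fintype α] [Fintype β] (M : Matrix α β ℝ) : ℝ :=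
  Real.sqrt (∑ i, ∑ j, (M i j) ^ 2)

noncomputable def projCol {m k : ℕ} (B : Matrix (Fin m) (Fin k) ℝ) :
    Matrix (Fin m) (Fin m) ℝ :=
  B * (Bᵀ * B)⁻¹ * Bᵀ


noncomputable def f2 {α β : Type*} [Fintype α] [Fintype β] (M : Matrix α β ℝ) : ℝ :=
  ∑ i, ∑ j, (M i j) ^ 2

def ip {α β : Type*} [Fintype α] [Fintype β] (M N : Matrix α β ℝ) : ℝ :=
  ∑ i, ∑ j, M i j * N i j

lemma f2_nonneg {α β : Type*} [Fintype α] [Fintype β] (M : Matrix α β ℝ) : 0 ≤ f2 M := by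
  unfold f2; positivity

lemma f2_sub {α β : Type*} [Fintype α] [Fintype β] (E Δ : Matrix α β ℝ) :
    f2 (E - Δ) = f2 E - 2 * ip E Δ + f2 Δ := by
  simp only [f2, ip, Matrix.sub_apply, Finset.mul_sum, ← Finset.sum_add_distrib,
    ← Finset.sum_sub_distrib]
  exact Finset.sum_congr rfl fun i _ => Finset.sum_congr rfl fun j _ => by ring

lemma ip_comm {α β : Type*} [Fintype α] [Fintype β] (M N : Matrix α β ℝ) :
    ip M N = ip N M := by
  simp only [ip]; exact Finset.sum_congr rfl fun i _ => Finset.sum_congr rfl fun j _ => mul_comm _ _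

lemma ip_eq_trace {α β : Type*} [Fintype α] [Fintype β] (M N : Matrix α β ℝ) :
    ip M N = Matrix.trace (Mᵀ * N) := by
  simp only [ip, Matrix.trace, Matrix.diag, Matrix.mul_apply, Matrix.transpose_apply]
  exact Finset.sum_comm

lemma ip_mul_right {α β γ : Type*} [Fintype α] [Fintype β] [Fintype γ]
    (E : Matrix α β ℝ) (Δ : Matrix α γ ℝ) (Cc : Matrix γ β ℝ) :
    ip E (Δ * Cc) = ip (E * Ccᵀ) Δ := by
  rw [ip_eq_trace, ip_eq_trace, Matrix.transpose_mul, Matrix.transpose_transpose,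
    ← Matrix.mul_assoc, Matrix.trace_mul_comm (Eᵀ * Δ) Cc, Matrix.mul_assoc]

lemma ip_mul_left {α β γ : Type*} [Fintype α] [Fintype β] [Fintype γ]
    (X : Matrix α γ ℝ) (Δ : Matrix γ β ℝ) (E : Matrix α β ℝ) :
    ip (X * Δ) E = ip Δ (Xᵀ * E) := by
  rw [ip_eq_trace, ip_eq_trace, Matrix.transpose_mul, Matrix.mul_assoc]

lemma ip_hadamard {α β : Type*} [Fintype α] [Fintype β] (P Q W : Matrix α β ℝ) :
    ip (Matrix.hadamard P W) (Matrix.hadamard Q W)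
      = ip (Matrix.hadamard (Matrix.hadamard P W) W) Q := by
  simp only [ip, Matrix.hadamard_apply]
  exact Finset.sum_congr rfl fun i _ => Finset.sum_congr rfl fun j _ => by ring

lemma ip_zero_right {α β : Type*} [Fintype α] [Fintype β] (M : Matrix α β ℝ) :
    ip M (0 : Matrix α β ℝ) = 0 := by simp [ip]

lemma ip_zero_left {α β : Type*} [Fintype α] [Fintype β] (M : Matrix α β ℝ) :
    ip (0 : Matrix α β ℝ) M = 0 := by simp [ip]

lemma hadamard_sub_left {α β : Type*} [Fintype α] [Fintype β] (P Q W : Matrix α β ℝ) :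
    Matrix.hadamard (P - Q) W = Matrix.hadamard P W - Matrix.hadamard Q W := by
  ext i j; simp [Matrix.hadamard_apply, sub_mul]

lemma hadamard_neg_left {α β : Type*} [Fintype α] [Fintype β] (P W : Matrix α β ℝ) :
    Matrix.hadamard (-P) W = -(Matrix.hadamard P W) := by
  ext i j; simp [Matrix.hadamard_apply]

lemma entry_sq_le {α β : Type*} [Fintype α] [Fintype β] (M : Matrix α β ℝ) (i : α) (j : β) :
    (M i j) ^ 2 ≤ f2 M := by
  unfold f2
  calc (M i j)^2 ≤ ∑ j', (M i j')^2 :=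
        Finset.single_le_sum (f := fun j' => (M i j')^2)
          (fun j' _ => sq_nonneg _) (Finset.mem_univ j)
    _ ≤ ∑ i', ∑ j', (M i' j')^2 :=
        Finset.single_le_sum (f := fun i' => ∑ j', (M i' j')^2)
          (fun i' _ => Finset.sum_nonneg fun j' _ => sq_nonneg _) (Finset.mem_univ i)

lemma abs_entry_le_sqrt {α β : Type*} [Fintype α] [Fintype β] (M : Matrix α β ℝ) (i : α) (j : β) :
    |M i j| ≤ Real.sqrt (f2 M) := by
  rw [← Real.sqrt_sq_eq_abs]
  exact Real.sqrt_le_sqrt (entry_sq_le M i j)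

lemma ip_neg_left {α β : Type*} [Fintype α] [Fintype β] (M N : Matrix α β ℝ) :
    ip (-M) N = -(ip M N) := by
  simp [ip, Finset.sum_neg_distrib]

lemma frob_sq' {α β : Type*} [Fintype α] [Fintype β] (M : Matrix α β ℝ) :
    frob M ^ 2 = f2 M := by
  unfold frob f2
  exact Real.sq_sqrt (by positivity)

lemma decrease {m k l s : ℕ}
    (A1 : Matrix (Fin m) (Fin k) ℝ) (A2 : Matrix (Fin m) (Fin l) ℝ)
    (W1 : Matrix (Fin m) (Fin k) ℝ)
    (X X' : Matrix (Fin m) (Fin k) ℝ) (Cc C' : Matrix (Fin k) (Fin l) ℝ)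
    (Bb B' : Matrix (Fin m) (Fin s) ℝ) (Dd D' : Matrix (Fin s) (Fin l) ℝ)
    (e1 : Matrix.hadamard (Matrix.hadamard (X' - A1) W1) W1 = (A2 - X' * Cc - Bb * Dd) * Ccᵀ)
    (e2 : X'ᵀ * (A2 - X' * C' - Bb * Dd) = 0)
    (e3 : (A2 - X' * C' - B' * Dd) * Ddᵀ = 0)
    (e4 : B'ᵀ * (A2 - X' * C' - B' * D') = 0) :
    f2 (Matrix.hadamard (A1 - X) W1) + f2 (A2 - X * Cc - Bb * Dd)
      = f2 (Matrix.hadamard (A1 - X') W1) + f2 (A2 - X' * C' - B' * D')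
        + f2 (Matrix.hadamard (X - X') W1) + f2 ((X - X') * Cc)
        + f2 (X' * (Cc - C')) + f2 ((Bb - B') * Dd) + f2 (B' * (Dd - D')) := by
  have hH : Matrix.hadamard (A1 - X) W1
      = Matrix.hadamard (A1 - X') W1 - Matrix.hadamard (X - X') W1 := by
    rw [← hadamard_sub_left]
    congr 1
    abel
  have hE1 : A2 - X * Cc - Bb * Dd = (A2 - X' * Cc - Bb * Dd) - (X - X') * Cc := by
    rw [Matrix.sub_mul]; abel
  have hneg : Matrix.hadamard (Matrix.hadamard (A1 - X') W1) W1
      = -((A2 - X' * Cc - Bb * Dd) * Ccᵀ) := by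
    rw [← e1, show A1 - X' = -(X' - A1) by abel, hadamard_neg_left, hadamard_neg_left]
  have c1 : ip (Matrix.hadamard (A1 - X') W1) (Matrix.hadamard (X - X') W1)
      = -(ip (A2 - X' * Cc - Bb * Dd) ((X - X') * Cc)) := by
    rw [ip_hadamard, hneg, ip_neg_left, ← ip_mul_right]
  have s1 : f2 (Matrix.hadamard (A1 - X) W1) + f2 (A2 - X * Cc - Bb * Dd)
      = f2 (Matrix.hadamard (A1 - X') W1) + f2 (A2 - X' * Cc - Bb * Dd)
        + f2 (Matrix.hadamard (X - X') W1) + f2 ((X - X') * Cc) := by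
    rw [hH, hE1, f2_sub, f2_sub, c1]; ring
  have hE2 : A2 - X' * Cc - Bb * Dd = (A2 - X' * C' - Bb * Dd) - X' * (Cc - C') := by
    rw [Matrix.mul_sub]; abel
  have c2 : ip (A2 - X' * C' - Bb * Dd) (X' * (Cc - C')) = 0 := by
    rw [ip_comm, ip_mul_left, e2, ip_zero_right]
  have s2 : f2 (A2 - X' * Cc - Bb * Dd)
      = f2 (A2 - X' * C' - Bb * Dd) + f2 (X' * (Cc - C')) := by
    rw [hE2, f2_sub, c2]; ring
  have hE3 : A2 - X' * C' - Bb * Dd = (A2 - X' * C' - B' * Dd) - (Bb - B') * Dd := by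
    rw [Matrix.sub_mul]; abel
  have c3 : ip (A2 - X' * C' - B' * Dd) ((Bb - B') * Dd) = 0 := by
    rw [ip_mul_right, e3, ip_zero_left]
  have s3 : f2 (A2 - X' * C' - Bb * Dd)
      = f2 (A2 - X' * C' - B' * Dd) + f2 ((Bb - B') * Dd) := by
    rw [hE3, f2_sub, c3]; ring
  have hE4 : A2 - X' * C' - B' * Dd = (A2 - X' * C' - B' * D') - B' * (Dd - D') := by
    rw [Matrix.mul_sub]; abel
  have c4 : ip (A2 - X' * C' - B' * D') (B' * (Dd - D')) = 0 := by
    rw [ip_comm, ip_mul_left, e4, ip_zero_right]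
  have s4 : f2 (A2 - X' * C' - B' * Dd)
      = f2 (A2 - X' * C' - B' * D') + f2 (B' * (Dd - D')) := by
    rw [hE4, f2_sub, c4]; ring
  linarith

/-- **Theorem 4.3 (ii).** If `Σ √(m_p − m_{p+1}) < ∞`, then `lim B_pD_p` and `lim (X1)_p`
exist, and moreover `lim B_{p+1}D_p = L* := lim B_pD_p`. -/
theorem stmt_16
    {m k l s : ℕ}
    (A1 : Matrix (Fin m) (Fin k) ℝ) (A2 : Matrix (Fin m) (Fin l) ℝ)
    (W1 : Matrix (Fin m) (Fin k) ℝ) (hW1 : ∀ i j, 0 < W1 i j)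
    (X1 : ℕ → Matrix (Fin m) (Fin k) ℝ) (C : ℕ → Matrix (Fin k) (Fin l) ℝ)
    (B : ℕ → Matrix (Fin m) (Fin s) ℝ) (D : ℕ → Matrix (Fin s) (Fin l) ℝ)
    (mseq : ℕ → ℝ)
    (hm : ∀ p, mseq p = frob (Matrix.hadamard (A1 - X1 p) W1) ^ 2 +
      frob (A2 - X1 p * C p - B p * D p) ^ 2)
    (heq1 : ∀ p, Matrix.hadamard (Matrix.hadamard (X1 (p + 1) - A1) W1) W1 =
      (A2 - X1 (p + 1) * C p - B p * D p) * (C p)ᵀ)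
    (heq2 : ∀ p, (X1 (p + 1))ᵀ * (A2 - X1 (p + 1) * C (p + 1) - B p * D p) = 0)
    (heq3 : ∀ p, (A2 - X1 (p + 1) * C (p + 1) - B (p + 1) * D p) * (D p)ᵀ = 0)
    (heq4 : ∀ p, (B (p + 1))ᵀ * (A2 - X1 (p + 1) * C (p + 1) - B (p + 1) * D (p + 1)) = 0)
    (hsum : Summable (fun p => Real.sqrt (mseq p - mseq (p + 1))))
    :
    (∃ X1s : Matrix (Fin m) (Fin k) ℝ, Tendsto X1 atTop (nhds X1s)) ∧
    ∃ Ls : Matrix (Fin m) (Fin l) ℝ,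
      Tendsto (fun p => B p * D p) atTop (nhds Ls) ∧
      Tendsto (fun p => B (p + 1) * D p) atTop (nhds Ls) := by
  -- squared Frobenius decrease identity
  have key : ∀ p, mseq p - mseq (p + 1)
      = f2 (Matrix.hadamard (X1 p - X1 (p + 1)) W1) + f2 ((X1 p - X1 (p + 1)) * C p)
        + f2 (X1 (p + 1) * (C p - C (p + 1))) + f2 ((B p - B (p + 1)) * D p)
        + f2 (B (p + 1) * (D p - D (p + 1))) := by
    intro p
    have hd := decrease A1 A2 W1 (X1 p) (X1 (p + 1)) (C p) (C (p + 1)) (B p) (B (p + 1))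
      (D p) (D (p + 1)) (heq1 p) (heq2 p) (heq3 p) (heq4 p)
    rw [hm p, hm (p + 1), frob_sq', frob_sq', frob_sq', frob_sq']
    linarith
  set g : ℕ → ℝ := fun p => Real.sqrt (mseq p - mseq (p + 1)) with hg
  have bX : ∀ p, f2 (Matrix.hadamard (X1 p - X1 (p + 1)) W1) ≤ mseq p - mseq (p + 1) := by
    intro p; rw [key p]
    have := f2_nonneg ((X1 p - X1 (p + 1)) * C p)
    have := f2_nonneg (X1 (p + 1) * (C p - C (p + 1)))
    have := f2_nonneg ((B p - B (p + 1)) * D p)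
    have := f2_nonneg (B (p + 1) * (D p - D (p + 1)))
    linarith
  have bB : ∀ p, f2 ((B p - B (p + 1)) * D p) ≤ mseq p - mseq (p + 1) := by
    intro p; rw [key p]
    have := f2_nonneg (Matrix.hadamard (X1 p - X1 (p + 1)) W1)
    have := f2_nonneg ((X1 p - X1 (p + 1)) * C p)
    have := f2_nonneg (X1 (p + 1) * (C p - C (p + 1)))
    have := f2_nonneg (B (p + 1) * (D p - D (p + 1)))
    linarith
  have bD : ∀ p, f2 (B (p + 1) * (D p - D (p + 1))) ≤ mseq p - mseq (p + 1) := by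
    intro p; rw [key p]
    have := f2_nonneg (Matrix.hadamard (X1 p - X1 (p + 1)) W1)
    have := f2_nonneg ((X1 p - X1 (p + 1)) * C p)
    have := f2_nonneg (X1 (p + 1) * (C p - C (p + 1)))
    have := f2_nonneg ((B p - B (p + 1)) * D p)
    linarith
  -- entrywise bound for matrices: |M i j| ≤ √(f2 M)
  -- convergence of X1
  have hX1 : ∃ X1s : Matrix (Fin m) (Fin k) ℝ, Tendsto X1 atTop (nhds X1s) := by
    have hXd : ∀ i j p, dist (X1 p i j) (X1 (p + 1) i j) ≤ (W1 i j)⁻¹ * g p := by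
      intro i j p
      have h1 : |Matrix.hadamard (X1 p - X1 (p + 1)) W1 i j|
          ≤ Real.sqrt (f2 (Matrix.hadamard (X1 p - X1 (p + 1)) W1)) := abs_entry_le_sqrt _ i j
      have h2 : Real.sqrt (f2 (Matrix.hadamard (X1 p - X1 (p + 1)) W1)) ≤ g p :=
        Real.sqrt_le_sqrt (bX p)
      have h3 : |X1 p i j - X1 (p + 1) i j| * W1 i j ≤ g p := by
        have : |Matrix.hadamard (X1 p - X1 (p + 1)) W1 i j|
            = |X1 p i j - X1 (p + 1) i j| * W1 i j := by
          rw [Matrix.hadamard_apply, Matrix.sub_apply, abs_mul, abs_of_pos (hW1 i j)]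
        linarith [this ▸ le_trans h1 h2]
      rw [Real.dist_eq, inv_mul_eq_div, le_div_iff₀ (hW1 i j)]
      exact h3
    have hcv : ∀ i j, ∃ a : ℝ, Tendsto (fun p => X1 p i j) atTop (nhds a) := by
      intro i j
      have hcs : CauchySeq (fun p => X1 p i j) := by
        apply cauchySeq_of_summable_dist
        apply Summable.of_nonneg_of_le (fun p => dist_nonneg) (hXd i j)
        exact hsum.mul_left _
      exact cauchySeq_tendsto_of_complete hcs
    choose X1s hX1s using hcv
    refine ⟨X1s, ?_⟩
    refine tendsto_pi_nhds.2 ?_; intro i; rw [tendsto_pi_nhds]; intro j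
    exact hX1s i j
  -- convergence of B p * D p
  have hEnt : ∀ (i : Fin m) (j : Fin l) p,
      |(B p * D p) i j - (B (p + 1) * D (p + 1)) i j| ≤ 2 * g p := by
    intro i j p
    have hsplit : B p * D p - B (p + 1) * D (p + 1)
        = (B p - B (p + 1)) * D p + B (p + 1) * (D p - D (p + 1)) := by
      rw [Matrix.sub_mul, Matrix.mul_sub]; abel
    have h1 : |((B p - B (p + 1)) * D p) i j| ≤ g p :=
      le_trans (abs_entry_le_sqrt _ i j) (Real.sqrt_le_sqrt (bB p))
    have h2 : |(B (p + 1) * (D p - D (p + 1))) i j| ≤ g p :=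
      le_trans (abs_entry_le_sqrt _ i j) (Real.sqrt_le_sqrt (bD p))
    have : (B p * D p) i j - (B (p + 1) * D (p + 1)) i j
        = ((B p - B (p + 1)) * D p) i j + (B (p + 1) * (D p - D (p + 1))) i j := by
      have := congrFun (congrFun hsplit i) j
      simpa using this
    rw [this]
    calc |((B p - B (p + 1)) * D p) i j + (B (p + 1) * (D p - D (p + 1))) i j|
        ≤ |((B p - B (p + 1)) * D p) i j| + |(B (p + 1) * (D p - D (p + 1))) i j| := abs_add_le _ _
      _ ≤ 2 * g p := by linarith
  have hcvL : ∀ i j, ∃ a : ℝ, Tendsto (fun p => (B p * D p) i j) atTop (nhds a) := by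
    intro i j
    have hb : ∀ p, dist ((B p * D p) i j) ((B (p + 1) * D (p + 1)) i j) ≤ 2 * g p := by
      intro p; rw [Real.dist_eq]; exact hEnt i j p
    have hcs : CauchySeq (fun p => (B p * D p) i j) := by
      apply cauchySeq_of_summable_dist
      exact Summable.of_nonneg_of_le (fun p => dist_nonneg) hb (hsum.mul_left 2)
    exact cauchySeq_tendsto_of_complete hcs
  choose Ls hLs using hcvL
  have hLsT : Tendsto (fun p => B p * D p) atTop (nhds Ls) := by
    refine tendsto_pi_nhds.2 ?_; intro i; rw [tendsto_pi_nhds]; intro j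
    exact hLs i j
  refine ⟨hX1, Ls, hLsT, ?_⟩
  have hg0 : Tendsto g atTop (nhds 0) := hsum.tendsto_atTop_zero
  refine tendsto_pi_nhds.2 ?_; intro i; rw [tendsto_pi_nhds]; intro j
  have hshift : Tendsto (fun p => (B (p + 1) * D (p + 1)) i j) atTop (nhds (Ls i j)) :=
    (hLs i j).comp (tendsto_add_atTop_nat 1)
  have hz : Tendsto (fun p => (B (p + 1) * (D p - D (p + 1))) i j) atTop (nhds 0) := by
    apply squeeze_zero_norm (fun p => le_trans (abs_entry_le_sqrt _ i j)
      (Real.sqrt_le_sqrt (bD p))) hg0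
  have hsum2 := hshift.add hz
  rw [add_zero] at hsum2
  apply hsum2.congr
  intro p
  have : B (p + 1) * D p = B (p + 1) * D (p + 1) + B (p + 1) * (D p - D (p + 1)) := by
    rw [Matrix.mul_sub]; abel
  have h := congrFun (congrFun this i) j
  simpa using h.symm
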